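/- The intersection F_9 ∩ C is nonempty; that is, there exists a point of the ternary Cantor set whose continued fraction partial quotients are all at most 9. -/

import Mathlib

/-- The Gauss map `x ↦ {1/x}`. -/
noncomputable def gaussMap (x : ℝ) : ℝ := Int.fract (1 / x)

/-- `Fset n` is the set of irrational numbers in `(0,1)` all of whose continued
fraction partial quotients are at most `n`. -/
noncomputable def Fset (n : ℕ) : Set ℝ :=
  {x | Irrational x ∧ x ∈ Set.Ioo (0 : ℝ) 1 ∧
    ∀ k : ℕ, ⌊1 / (gaussMap^[k] x)⌋ ≤ (n : ℤ)}

/-- The ternary Cantor set `{∑ 2bₙ 3^{-(n+1)} : b : ℕ → {0,1}}`. -/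
noncomputable def ternaryCantor : Set ℝ :=
  {x | ∃ b : ℕ → Bool, x = ∑' n : ℕ, (if b n then (2 : ℝ) else 0) / 3 ^ (n + 1)}


namespace Stmt7Aux

/-- The Gauss map (local copy for lemma development). -/
noncomputable def gmap (x : ℝ) : ℝ := Int.fract (1 / x)

/-! ### 2×2 integer matrices -/

structure M2 where
  a : ℤ
  b : ℤ
  c : ℤ
  d : ℤ
deriving DecidableEq

def M2.mul (x y : M2) : M2 :=
  ⟨x.a*y.a + x.b*y.c, x.a*y.b + x.b*y.d, x.c*y.a + x.d*y.c, x.c*y.b + x.d*y.d⟩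

def M2.one : M2 := ⟨1,0,0,1⟩

def M2.tr (x : M2) : M2 := ⟨x.a, x.c, x.b, x.d⟩

lemma M2.mul_assoc (x y z : M2) : (x.mul y).mul z = x.mul (y.mul z) := by
  cases x; cases y; cases z; simp only [M2.mul, M2.mk.injEq]; refine ⟨by ring, by ring, by ring, by ring⟩

lemma M2.mul_one (x : M2) : x.mul M2.one = x := by
  cases x; simp only [M2.mul, M2.one, M2.mk.injEq]; refine ⟨by ring, by ring, by ring, by ring⟩

lemma M2.one_mul (x : M2) : M2.one.mul x = x := by
  cases x; simp only [M2.mul, M2.one, M2.mk.injEq]; refine ⟨by ring, by ring, by ring, by ring⟩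

lemma M2.tr_mul (x y : M2) : (x.mul y).tr = y.tr.mul x.tr := by
  cases x; cases y; simp only [M2.mul, M2.tr, M2.mk.injEq]; refine ⟨by ring, by ring, by ring, by ring⟩

def Amat (t : ℤ) : M2 := ⟨0,1,1,t⟩

def Nmat (w : List ℤ) : M2 := w.foldr (fun t m => (Amat t).mul m) M2.one

@[simp] lemma Nmat_nil : Nmat [] = M2.one := rfl

@[simp] lemma Nmat_cons (t : ℤ) (w : List ℤ) : Nmat (t :: w) = (Amat t).mul (Nmat w) := rfl

lemma Nmat_append (u v : List ℤ) : Nmat (u ++ v) = (Nmat u).mul (Nmat v) := by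
  induction u with
  | nil => simp [M2.one_mul]
  | cons t u ih => simp [ih, M2.mul_assoc]

lemma Amat_tr (t : ℤ) : (Amat t).tr = Amat t := rfl

lemma Nmat_reverse (w : List ℤ) : Nmat w.reverse = (Nmat w).tr := by
  induction w with
  | nil => rfl
  | cons t w ih =>
      have h : Nmat (t :: w) = (Amat t).mul (Nmat w) := rfl
      rw [List.reverse_cons, Nmat_append, ih, h, M2.tr_mul]
      simp [Nmat, Amat, M2.mul, M2.one, M2.tr]

/-- Positivity of continuant entries. -/
lemma Nmat_pos (w : List ℤ) (hw : ∀ t ∈ w, 1 ≤ t) :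
    0 ≤ (Nmat w).a ∧ 0 ≤ (Nmat w).b ∧ 0 ≤ (Nmat w).c ∧ 1 ≤ (Nmat w).d := by
  induction w with
  | nil => simp [M2.one]
  | cons t w ih =>
      have ht : 1 ≤ t := hw t (by simp)
      obtain ⟨h1, h2, h3, h4⟩ := ih (fun s hs => hw s (by simp [hs]))
      simp only [Nmat_cons, M2.mul, Amat]
      refine ⟨by nlinarith, by nlinarith, by nlinarith, by nlinarith⟩


/-! ### Cylinder sets for continued fractions -/

def cyl : List ℤ → Set ℝ
  | [] => Set.Ioo 0 1
  | t :: w => (fun y : ℝ => 1 / ((t : ℝ) + y)) '' cyl w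

lemma cyl_subset (w : List ℤ) (hw : ∀ t ∈ w, 1 ≤ t) : cyl w ⊆ Set.Ioo 0 1 := by
  induction w with
  | nil => exact fun x hx => hx
  | cons t w ih =>
      rintro x ⟨y, hy, rfl⟩
      have ht : (1:ℝ) ≤ (t:ℝ) := by exact_mod_cast hw t (by simp)
      have hy' : y ∈ Set.Ioo (0:ℝ) 1 := ih (fun s hs => hw s (by simp [hs])) hy
      have h1 : (1:ℝ) < (t:ℝ) + y := by
        rcases hy' with ⟨h0, _⟩; linarith
      constructor
      · positivity
      · rw [div_lt_one (by linarith)]; linarith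

lemma cyl_step {t : ℤ} {w : List ℤ} {x : ℝ} (ht : 1 ≤ t) (hw : ∀ s ∈ w, 1 ≤ s)
    (hx : x ∈ cyl (t :: w)) :
    gmap x ∈ cyl w ∧ 1 / ((t:ℝ) + 1) < x ∧ x < 1 / (t:ℝ) := by
  obtain ⟨y, hy, rfl⟩ := hx
  have hy' : y ∈ Set.Ioo (0:ℝ) 1 := cyl_subset w hw hy
  obtain ⟨hy0, hy1⟩ := hy'
  have ht' : (1:ℝ) ≤ (t:ℝ) := by exact_mod_cast ht
  have hty : (0:ℝ) < (t:ℝ) + y := by linarith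
  have hgy : gmap (1 / ((t:ℝ) + y)) = y := by
    unfold gmap
    rw [one_div_one_div]
    have : (t:ℝ) + y = (t:ℤ) + y := by push_cast; ring
    rw [this, Int.fract_intCast_add, Int.fract_eq_self.mpr ⟨le_of_lt hy0, hy1⟩]
  refine ⟨by rw [hgy]; exact hy, ?_, ?_⟩
  · apply one_div_lt_one_div_of_lt
    · linarith
    · linarith
  · apply one_div_lt_one_div_of_lt
    · linarith
    · linarith

lemma cyl_orbit (w : List ℤ) (hw : ∀ t ∈ w, 1 ≤ t ∧ t ≤ 9) :
    ∀ x ∈ cyl w, ∀ k, k < w.length →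
      1/10 < gmap^[k] x ∧ gmap^[k] x < 1 := by
  induction w with
  | nil => intro x _ k hk; simp at hk
  | cons t w ih =>
      intro x hx k hk
      have ht := hw t (by simp)
      have hw' : ∀ s ∈ w, 1 ≤ s ∧ s ≤ 9 := fun s hs => hw s (by simp [hs])
      obtain ⟨hg, hlo, hhi⟩ := cyl_step ht.1 (fun s hs => (hw' s hs).1) hx
      cases k with
      | zero =>
          simp only [Function.iterate_zero, id_eq]
          have ht1 : (t:ℝ) ≤ 9 := by exact_mod_cast ht.2
          have ht0 : (1:ℝ) ≤ (t:ℝ) := by exact_mod_cast ht.1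
          constructor
          · have : (1:ℝ)/10 ≤ 1/((t:ℝ)+1) := by
              apply one_div_le_one_div_of_le <;> linarith
            linarith
          · have : 1/(t:ℝ) ≤ 1 := by
              rw [div_le_one (by linarith)]; linarith
            linarith
      | succ k =>
          rw [Function.iterate_succ_apply]
          exact ih hw' _ hg k (by simpa using hk)

/-! ### Membership in a cylinder from the two-sided inequality -/

lemma btw_descend (A B C D t x : ℝ) (pA : 0 ≤ A) (pB : 0 ≤ B) (pC : 0 ≤ C) (pD : 1 ≤ D)
    (ht : 1 ≤ t)
    (h : (D/(B + t*D) - x) * ((C + D)/(A + t*C + (B + t*D)) - x) < 0) :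
    0 < x ∧ (B/D - (1/x - t)) * ((A + B)/(C + D) - (1/x - t)) < 0 := by
  have d1 : (0:ℝ) < B + t*D := by nlinarith
  have d2 : (0:ℝ) < C + D := by nlinarith
  have d3 : (0:ℝ) < A + t*C + (B + t*D) := by nlinarith
  have hx : 0 < x := by
    by_contra hx0
    push_neg at hx0
    have f1 : 0 < D/(B + t*D) - x := by
      have : (0:ℝ) < D/(B + t*D) := by positivity
      linarith
    have f2 : 0 < (C + D)/(A + t*C + (B + t*D)) - x := by
      have : (0:ℝ) < (C + D)/(A + t*C + (B + t*D)) := by positivity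
      linarith
    nlinarith [mul_pos f1 f2]
  refine ⟨hx, ?_⟩
  have hD0 : D ≠ 0 := by linarith
  have hx0 : x ≠ 0 := ne_of_gt hx
  have hd1 : B + t*D ≠ 0 := ne_of_gt d1
  have hd2 : C + D ≠ 0 := ne_of_gt d2
  have hd3 : A + t*C + (B + t*D) ≠ 0 := ne_of_gt d3
  have t1 : B/D - (1/x - t) = (x - D/(B + t*D)) * ((B + t*D)/(D*x)) := by
    field_simp
    ring
  have t2 : (A + B)/(C + D) - (1/x - t) =
      (x - (C + D)/(A + t*C + (B + t*D))) * ((A + t*C + (B + t*D))/((C + D)*x)) := by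
    field_simp
    ring
  have e : (B/D - (1/x - t)) * ((A + B)/(C + D) - (1/x - t)) =
      ((D/(B + t*D) - x) * ((C + D)/(A + t*C + (B + t*D)) - x)) *
      (((B + t*D)/(D*x)) * ((A + t*C + (B + t*D))/((C + D)*x))) := by
    rw [t1, t2]; ring
  rw [e]
  exact mul_neg_of_neg_of_pos h (by positivity)

lemma mem_cyl_of_btw (w : List ℤ) (hw : ∀ t ∈ w, 1 ≤ t) (x : ℝ)
    (h : (((Nmat w).b : ℝ)/((Nmat w).d : ℝ) - x) *
         ((((Nmat w).a : ℝ) + ((Nmat w).b : ℝ))/(((Nmat w).c : ℝ) + ((Nmat w).d : ℝ)) - x) < 0) :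
    x ∈ cyl w := by
  induction w generalizing x with
  | nil =>
      simp only [Nmat_nil, M2.one] at h
      norm_num at h
      constructor
      · nlinarith
      · nlinarith
  | cons t w ih =>
      have ht : 1 ≤ t := hw t (by simp)
      have ht' : (1:ℝ) ≤ (t:ℝ) := by exact_mod_cast ht
      obtain ⟨pa, pb, pc, pd⟩ := Nmat_pos w (fun s hs => hw s (by simp [hs]))
      have pA : (0:ℝ) ≤ ((Nmat w).a : ℝ) := by exact_mod_cast pa
      have pB : (0:ℝ) ≤ ((Nmat w).b : ℝ) := by exact_mod_cast pb
      have pC : (0:ℝ) ≤ ((Nmat w).c : ℝ) := by exact_mod_cast pc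
      have pD : (1:ℝ) ≤ ((Nmat w).d : ℝ) := by exact_mod_cast pd
      have hent : (Nmat (t :: w)) = ⟨(Nmat w).c, (Nmat w).d,
          (Nmat w).a + t * (Nmat w).c, (Nmat w).b + t * (Nmat w).d⟩ := by
        simp [Nmat_cons, M2.mul, Amat]
      rw [hent] at h
      dsimp only at h
      push_cast at h
      have h' : (((Nmat w).d : ℝ)/(((Nmat w).b : ℝ) + (t:ℝ)*((Nmat w).d : ℝ)) - x) *
          ((((Nmat w).c : ℝ) + ((Nmat w).d : ℝ))/
            (((Nmat w).a : ℝ) + (t:ℝ)*((Nmat w).c : ℝ) +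
              (((Nmat w).b : ℝ) + (t:ℝ)*((Nmat w).d : ℝ))) - x) < 0 := by
        convert h using 4 <;> ring
      obtain ⟨hx, key⟩ := btw_descend _ _ _ _ _ x pA pB pC pD ht' h'
      refine ⟨1/x - (t:ℝ), ih (fun s hs => hw s (by simp [hs])) _ key, ?_⟩
      show 1/((t:ℝ) + (1/x - (t:ℝ))) = x
      have : (t:ℝ) + (1/x - (t:ℝ)) = 1/x := by ring
      rw [this, one_div_one_div]

/-! ### The folded words and their continuant matrices -/

def w3 : List ℤ := [3,2,1,2,2,1,1,1,2,3]

def wd : ℕ → List ℤ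
  | 0 => w3
  | i+1 => if i % 2 = 0 then (wd i).dropLast ++ ([2,1,2] ++ (wd i).reverse)
           else wd i ++ ([2,1,2] ++ ((wd i).dropLast).reverse)

def st : ℕ → M2
  | 0 => ⟨192, 649, 647, 2187⟩
  | i+1 => if i % 2 = 0 then
      ⟨3*(st i).b^2, 3*(st i).b*(st i).d - 1, 3*(st i).b*(st i).d + 1, 3*(st i).d^2⟩
    else
      ⟨3*(st i).b^2, 3*(st i).b*(st i).d + 1, 3*(st i).b*(st i).d - 1, 3*(st i).d^2⟩

lemma wd_succ_even {i : ℕ} (h : i % 2 = 0) :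
    wd (i+1) = (wd i).dropLast ++ ([2,1,2] ++ (wd i).reverse) := by
  simp [wd, h]

lemma wd_succ_odd {i : ℕ} (h : ¬ i % 2 = 0) :
    wd (i+1) = wd i ++ ([2,1,2] ++ ((wd i).dropLast).reverse) := by
  simp [wd, h]

lemma st_succ_even {i : ℕ} (h : i % 2 = 0) :
    st (i+1) = ⟨3*(st i).b^2, 3*(st i).b*(st i).d - 1, 3*(st i).b*(st i).d + 1, 3*(st i).d^2⟩ := by
  simp [st, h]

lemma st_succ_odd {i : ℕ} (h : ¬ i % 2 = 0) :
    st (i+1) = ⟨3*(st i).b^2, 3*(st i).b*(st i).d + 1, 3*(st i).b*(st i).d - 1, 3*(st i).d^2⟩ := by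
  simp [st, h]

lemma wd_shape (i : ℕ) : ∃ u : List ℤ, wd i = 3 :: (u ++ [3]) := by
  induction i with
  | zero => exact ⟨[2,1,2,2,1,1,1,2], rfl⟩
  | succ i ih =>
      obtain ⟨u, hu⟩ := ih
      have hconc : wd i = (3 :: u) ++ [3] := by simp [hu]
      have hdl : (wd i).dropLast = 3 :: u := by
        rw [hconc, List.dropLast_concat]
      have hrev : (wd i).reverse = 3 :: (u.reverse ++ [3]) := by
        rw [hconc]; simp
      by_cases h : i % 2 = 0
      · refine ⟨u ++ [2,1,2,3] ++ u.reverse, ?_⟩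
        rw [wd_succ_even h, hdl, hrev]
        simp
      · refine ⟨(u ++ [3]) ++ [2,1,2] ++ u.reverse, ?_⟩
        rw [wd_succ_odd h, hdl, hu]
        simp

lemma wd_entries (i : ℕ) : ∀ t ∈ wd i, 1 ≤ t ∧ t ≤ 9 := by
  induction i with
  | zero => decide
  | succ i ih =>
      intro t ht
      have hmid : t ∈ ([2,1,2] : List ℤ) → 1 ≤ t ∧ t ≤ 9 := by
        intro hm
        simp only [List.mem_cons, List.not_mem_nil, or_false] at hm
        rcases hm with rfl | rfl | rfl <;> norm_num
      by_cases h : i % 2 = 0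
      · rw [wd_succ_even h] at ht
        simp only [List.mem_append, List.mem_reverse] at ht
        rcases ht with ht | ht | ht
        · exact ih t (List.dropLast_subset _ ht)
        · exact hmid ht
        · exact ih t ht
      · rw [wd_succ_odd h] at ht
        simp only [List.mem_append, List.mem_reverse] at ht
        rcases ht with ht | ht | ht
        · exact ih t ht
        · exact hmid ht
        · exact ih t (List.dropLast_subset _ ht)

lemma wd_len (i : ℕ) : i + 2 ≤ (wd i).length := by
  induction i with
  | zero => simp [wd, w3]
  | succ i ih =>
      by_cases h : i % 2 = 0
      · rw [wd_succ_even h]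
        simp only [List.length_append, List.length_reverse, List.length_dropLast]
        omega
      · rw [wd_succ_odd h]
        simp only [List.length_append, List.length_reverse, List.length_dropLast]
        omega

lemma st_facts (i : ℕ) :
    (st i).a * (st i).d - (st i).b * (st i).c = 1 ∧ 1 ≤ (st i).b ∧ 3*(st i).b < (st i).d ∧
      1 ≤ (st i).c ∧ 2*(st i).c < (st i).d := by
  induction i with
  | zero => norm_num [st]
  | succ i ih =>
      obtain ⟨h1, h2, h3, h4, h5⟩ := ih
      have hd : (3:ℤ) ≤ (st i).d := by nlinarith
      by_cases h : i % 2 = 0 <;> [rw [st_succ_even h]; rw [st_succ_odd h]] <;> dsimp only <;>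
        exact ⟨by ring, by nlinarith, by nlinarith, by nlinarith, by nlinarith⟩

lemma st_d_pow (i : ℕ) : (st i).d = 3^(2^(i+3) - 1) := by
  induction i with
  | zero => norm_num [st]
  | succ i ih =>
      have hd : (st (i+1)).d = 3 * (st i).d^2 := by
        by_cases h : i % 2 = 0
        · rw [st_succ_even h]
        · rw [st_succ_odd h]
      rw [hd, ih]
      have h2 : 2^(i+1+3) - 1 = (2^(i+3) - 1)*2 + 1 := by
        have h3 : 1 ≤ 2^(i+3) := Nat.one_le_two_pow
        have h4 : 2^(i+1+3) = 2*2^(i+3) := by ring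
        omega
      have h5 : (3:ℤ)^((2^(i+3)-1)*2+1) = 3*((3^(2^(i+3)-1))^2) := by
        rw [pow_succ, pow_mul]
        ring
      rw [h2, h5]

def A3inv : M2 := ⟨-3, 1, 1, 0⟩

lemma Nmat_wd (i : ℕ) : Nmat (wd i) = st i := by
  induction i with
  | zero =>
      show Nmat w3 = st 0
      norm_num [Nmat, w3, st, Amat, M2.mul, M2.one]
  | succ i ih =>
      obtain ⟨u, hu⟩ := wd_shape i
      have hconc : wd i = (3 :: u) ++ [3] := by simp [hu]
      have hdl : (wd i).dropLast = 3 :: u := by rw [hconc, List.dropLast_concat]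
      have hNu : Nmat (3 :: u) = (st i).mul A3inv := by
        have h1 : (Nmat (3 :: u)).mul (Amat 3) = st i := by
          have h4 : Nmat [3] = Amat 3 := by norm_num [Nmat, Amat, M2.mul, M2.one]
          rw [← ih, hconc, Nmat_append, h4]
        have h2 : Nmat (3 :: u) = ((Nmat (3 :: u)).mul (Amat 3)).mul A3inv := by
          rw [M2.mul_assoc]
          have h3 : (Amat 3).mul A3inv = M2.one := by
            norm_num [Amat, A3inv, M2.mul, M2.one]
          rw [h3, M2.mul_one]
        rw [h2, h1]
      have hB3 : Nmat [2,1,2] = (⟨1,3,3,8⟩ : M2) := by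
        norm_num [Nmat, Amat, M2.mul, M2.one]
      obtain ⟨hdet, _, _, _, _⟩ := st_facts i
      by_cases h : i % 2 = 0
      · have hw : wd (i+1) = (3 :: u) ++ ([2,1,2] ++ (wd i).reverse) := by
          rw [wd_succ_even h, hdl]
        rw [hw, Nmat_append, Nmat_append, Nmat_reverse, hNu, hB3, ih, st_succ_even h]
        show ((st i).mul A3inv).mul ((⟨1,3,3,8⟩ : M2).mul (st i).tr) = _
        simp only [A3inv, M2.mul, M2.tr]
        rw [M2.mk.injEq]
        refine ⟨by ring, by linear_combination (-1 : ℤ) * hdet,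
          by linear_combination hdet, by ring⟩
      · have hw : wd (i+1) = wd i ++ ([2,1,2] ++ (3 :: u).reverse) := by
          rw [wd_succ_odd h, hdl]
        rw [hw, Nmat_append, Nmat_append, Nmat_reverse, hNu, hB3, ih, st_succ_odd h]
        show (st i).mul ((⟨1,3,3,8⟩ : M2).mul (((st i).mul A3inv).tr)) = _
        simp only [A3inv, M2.mul, M2.tr]
        rw [M2.mk.injEq]
        refine ⟨by ring, by linear_combination hdet,
          by linear_combination (-1 : ℤ) * hdet, by ring⟩

lemma Nmat_wd_dl (i : ℕ) : Nmat ((wd i).dropLast) =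
    ⟨(st i).b - 3*(st i).a, (st i).a, (st i).d - 3*(st i).c, (st i).c⟩ := by
  obtain ⟨u, hu⟩ := wd_shape i
  have hconc : wd i = (3 :: u) ++ [3] := by simp [hu]
  have hdl : (wd i).dropLast = 3 :: u := by rw [hconc, List.dropLast_concat]
  have h1 : (Nmat (3 :: u)).mul (Amat 3) = st i := by
    have h4 : Nmat [3] = Amat 3 := by norm_num [Nmat, Amat, M2.mul, M2.one]
    rw [← Nmat_wd i, hconc, Nmat_append, h4]
  have h2 : Nmat (3 :: u) = ((Nmat (3 :: u)).mul (Amat 3)).mul A3inv := by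
    rw [M2.mul_assoc]
    have h3 : (Amat 3).mul A3inv = M2.one := by
      norm_num [Amat, A3inv, M2.mul, M2.one]
    rw [h3, M2.mul_one]
  rw [hdl, h2, h1]
  simp only [A3inv, M2.mul]
  rw [M2.mk.injEq]
  refine ⟨by ring, by ring, by ring, by ring⟩

/-! ### The Cantor-set point and its partial sums -/

def bfun (n : ℕ) : Bool := (Nat.log 2 (n+1)) % 2 == 1

noncomputable def f (n : ℕ) : ℝ := (if bfun n then (2:ℝ) else 0) / 3 ^ (n+1)

noncomputable def xval : ℝ := ∑' n, f n

noncomputable def PS (N : ℕ) : ℝ := ∑ n ∈ Finset.range N, f n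

def mexp (j : ℕ) : ℕ := 2^j - 1

lemma mexp_succ (j : ℕ) : mexp (j+1) = 2 * mexp j + 1 := by
  have h1 : 1 ≤ 2^j := Nat.one_le_two_pow
  have h2 : 2^(j+1) = 2*2^j := by ring
  simp only [mexp]
  omega

lemma mexp_mono {a b : ℕ} (h : a ≤ b) : mexp a ≤ mexp b := by
  have := Nat.pow_le_pow_right (by norm_num : 1 ≤ 2) h
  simp only [mexp]
  omega

lemma f_nonneg (n : ℕ) : 0 ≤ f n := by
  unfold f
  split <;> positivity

lemma f_le (n : ℕ) : f n ≤ (2/3) * (1/3)^n := by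
  unfold f
  have h : (0:ℝ) < 3^(n+1) := by positivity
  have he : (2/3) * (1/3:ℝ)^n = 2 / 3^(n+1) := by
    rw [div_pow, one_pow, pow_succ]
    ring
  rw [he]
  split
  · exact le_refl _
  · rw [zero_div]; positivity

lemma summable_f : Summable f := by
  apply Summable.of_nonneg_of_le f_nonneg f_le
  exact (summable_geometric_of_lt_one (by norm_num) (by norm_num)).mul_left _

lemma tail_bounds (N : ℕ) : 0 ≤ xval - PS N ∧ xval - PS N ≤ (1/3:ℝ)^N := by
  have hs : Summable (fun n => f (n + N)) := (summable_nat_add_iff N).2 summable_f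
  have hsplit : PS N + ∑' n, f (n + N) = xval := summable_f.sum_add_tsum_nat_add N
  have hx : xval - PS N = ∑' n, f (n + N) := by linarith
  constructor
  · rw [hx]
    exact tsum_nonneg (fun n => f_nonneg _)
  · rw [hx]
    have hle : ∀ n, f (n + N) ≤ (2/3) * (1/3:ℝ)^(n + N) := fun n => f_le _
    have hg0 : Summable (fun n : ℕ => (1/3:ℝ)^n) :=
      summable_geometric_of_lt_one (by norm_num) (by norm_num)
    have hg : Summable (fun n => (2/3) * (1/3:ℝ)^(n + N)) := by
      apply Summable.mul_left
      exact (hg0.mul_right ((1/3:ℝ)^N)).congr (fun n => by rw [pow_add])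
    calc ∑' n, f (n + N) ≤ ∑' n, (2/3) * (1/3:ℝ)^(n + N) := Summable.tsum_le_tsum hle hs hg
      _ = (2/3) * ((1/3)^N * (1 - 1/3)⁻¹) := by
          rw [tsum_mul_left]
          congr 1
          rw [← tsum_geometric_of_lt_one (by norm_num : (0:ℝ) ≤ 1/3) (by norm_num), ← tsum_mul_left]
          exact tsum_congr (fun n => by rw [pow_add]; ring)
      _ = (1/3)^N := by ring

/-! ### Partial sum evaluations -/

lemma bfun_eq {j n : ℕ} (h1 : mexp j ≤ n) (h2 : n < mexp (j+1)) :
    bfun n = (j % 2 == 1) := by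
  have hp1 : 1 ≤ 2^j := Nat.one_le_two_pow
  have hlog : Nat.log 2 (n+1) = j := by
    apply Nat.log_eq_of_pow_le_of_lt_pow
    · simp only [mexp] at h1; omega
    · simp only [mexp] at h2; omega
  simp only [bfun, hlog]

lemma f_of_bfun_true {n : ℕ} (h : bfun n = true) : f n = (2/3) * (1/3:ℝ)^n := by
  unfold f
  rw [h, if_pos rfl]
  rw [div_pow, one_pow, pow_succ]
  ring

lemma f_of_bfun_false {n : ℕ} (h : bfun n = false) : f n = 0 := by
  unfold f
  rw [h]
  norm_num

lemma PS_step (j : ℕ) : PS (mexp (j+1)) =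
    PS (mexp j) + (if j % 2 = 1 then ((1/3:ℝ)^(mexp j) - (1/3)^(mexp (j+1))) else 0) := by
  have hm : mexp j ≤ mexp (j+1) := mexp_mono (by omega)
  have hsplit : PS (mexp (j+1)) = PS (mexp j) + ∑ n ∈ Finset.Ico (mexp j) (mexp (j+1)), f n := by
    unfold PS
    rw [Finset.range_eq_Ico, ← Finset.sum_Ico_consecutive _ (Nat.zero_le _) hm]
    rw [Finset.range_eq_Ico]
  rw [hsplit]
  congr 1
  by_cases hj : j % 2 = 1
  · rw [if_pos hj]
    have hb : ∀ n ∈ Finset.Ico (mexp j) (mexp (j+1)), f n = (2/3) * (1/3:ℝ)^n := by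
      intro n hn
      rw [Finset.mem_Ico] at hn
      apply f_of_bfun_true
      rw [bfun_eq hn.1 hn.2, hj]
      rfl
    rw [Finset.sum_congr rfl hb, ← Finset.mul_sum,
      geom_sum_Ico (by norm_num : (1/3:ℝ) ≠ 1) hm]
    have h3 : (1/3:ℝ) - 1 = -(2/3) := by norm_num
    rw [h3]
    field_simp
    ring
  · rw [if_neg hj]
    apply Finset.sum_eq_zero
    intro n hn
    rw [Finset.mem_Ico] at hn
    apply f_of_bfun_false
    rw [bfun_eq hn.1 hn.2]
    exact beq_eq_false_iff_ne.mpr hj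

lemma PS_st (i : ℕ) : PS (mexp (i+4)) =
    ((st i).b : ℝ)/((st i).d : ℝ) - (if i % 2 = 0 then (1/3:ℝ)^(mexp (i+4)) else 0) := by
  induction i with
  | zero =>
      have h0 : PS (mexp 1) = PS (mexp 0) := by simpa using PS_step 0
      have h00 : PS (mexp 0) = 0 := by
        simp [PS, mexp]
      have h1 : PS (mexp 2) = PS (mexp 1) + ((1/3:ℝ)^(mexp 1) - (1/3)^(mexp 2)) := by
        simpa using PS_step 1
      have h2 : PS (mexp 3) = PS (mexp 2) := by simpa using PS_step 2
      have h3 : PS (mexp 4) = PS (mexp 3) + ((1/3:ℝ)^(mexp 3) - (1/3)^(mexp 4)) := by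
        simpa using PS_step 3
      rw [h3, h2, h1, h0, h00]
      have e1 : mexp 1 = 1 := by norm_num [mexp]
      have e2 : mexp 2 = 3 := by norm_num [mexp]
      have e3 : mexp 3 = 7 := by norm_num [mexp]
      have e4 : mexp 4 = 15 := by norm_num [mexp]
      rw [e1, e2, e3, e4]
      norm_num [st]
  | succ i ih =>
      have hstep := PS_step (i+4)
      have hd : ((st i).d : ℝ) = 3^(mexp (i+3)) := by
        rw [st_d_pow i]
        push_cast
        rfl
      have hd' : ((st i).d : ℝ) ≠ 0 := by
        rw [hd]; positivity
      have h3d : (3:ℝ) * ((st i).d : ℝ)^2 = 3^(mexp (i+4)) := by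
        rw [hd, mexp_succ (i+3), pow_succ, two_mul, pow_add]
        ring
      have hr : (1/3:ℝ)^(mexp (i+4)) = 1/(3 * ((st i).d:ℝ)^2) := by
        rw [div_pow, one_pow, ← h3d]
      by_cases h : i % 2 = 0
      · -- st (i+1) : b' = 3bd - 1 ; i+1 is odd
        have hodd : ¬ (i+1) % 2 = 0 := by omega
        have hb' := st_succ_even h
        rw [if_neg hodd]
        rw [hb']
        dsimp only
        have hji : (i+1+4) = (i+4)+1 := by ring
        rw [hji, hstep]
        have hblock : ¬ (i+4) % 2 = 1 := by omega
        rw [if_neg hblock, ih, if_pos h]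
        push_cast
        rw [hr]
        have hD2 : (3:ℝ) * ((st i).d:ℝ)^2 ≠ 0 := by
          rw [h3d]; positivity
        field_simp
        ring
      · -- st (i+1) : b' = 3bd + 1 ; i+1 is even
        have heven : (i+1) % 2 = 0 := by omega
        have hb' := st_succ_odd h
        rw [if_pos heven]
        rw [hb']
        dsimp only
        have hji : (i+1+4) = (i+4)+1 := by ring
        rw [hji, hstep]
        have hblock : (i+4) % 2 = 1 := by omega
        rw [if_pos hblock, ih, if_neg h]
        have hr' : (1/3:ℝ)^(mexp (i+4+1)) = 1/(3 * ((3:ℝ) * ((st i).d:ℝ)^2)^2) := by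
          have e : (3:ℝ) * ((3:ℝ) * ((st i).d:ℝ)^2)^2 = 3^(mexp (i+4+1)) := by
            rw [h3d, mexp_succ (i+4), pow_succ, two_mul, pow_add]
            ring
          rw [div_pow, one_pow, ← e]
        push_cast
        rw [hr', hr]
        have hD2 : (3:ℝ) * ((st i).d:ℝ)^2 ≠ 0 := by
          rw [h3d]; positivity
        field_simp
        ring

lemma val_bound (i : ℕ) :
    |xval - ((st i).b : ℝ)/((st i).d : ℝ)| ≤ (1/3:ℝ)^(mexp (i+4)) := by
  obtain ⟨ht0, ht1⟩ := tail_bounds (mexp (i+4))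
  have hps := PS_st i
  rw [abs_le]
  by_cases h : i % 2 = 0
  · rw [if_pos h] at hps
    constructor <;> nlinarith
  · rw [if_neg h] at hps
    have : (0:ℝ) ≤ (1/3:ℝ)^(mexp (i+4)) := by positivity
    constructor <;> nlinarith

/-! ### The point lies in every cylinder -/

lemma final_btw (A B C D x : ℝ) (hdet : A*D - B*C = 1) (hC : 1 ≤ C) (hCD : 2*C < D)
    (hD : 3 ≤ D) (habs : |x*D - B| ≤ 1/(3*D)) :
    (A/C - x) * ((B - 3*A + A)/(D - 3*C + C) - x) < 0 := by
  have hC0 : (0:ℝ) < C := by linarith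
  have hD0 : (0:ℝ) < D := by linarith
  have hDC : (0:ℝ) < D - 2*C := by linarith
  obtain ⟨h1, h2⟩ := abs_le.mp habs
  have key1 : 0 < A - x*C := by
    have e : D*(A - x*C) = 1 - C*(x*D - B) := by linear_combination hdet
    have hCu : C*(x*D - B) ≤ C*(1/(3*D)) :=
      mul_le_mul_of_nonneg_left h2 (le_of_lt hC0)
    have hlt : C*(1/(3*D)) < 1 := by
      rw [mul_one_div, div_lt_one (by linarith)]
      linarith
    nlinarith
  have key2 : (B - 3*A + A) - x*(D - 3*C + C) < 0 := by
    have e : D*((B - 3*A + A) - x*(D - 3*C + C)) = -2 - (D - 2*C)*(x*D - B) := by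
      linear_combination (-2:ℝ)*hdet
    have hDu : (D - 2*C)*(-(x*D - B)) ≤ (D - 2*C)*(1/(3*D)) :=
      mul_le_mul_of_nonneg_left (by linarith) (le_of_lt hDC)
    have hlt : (D - 2*C)*(1/(3*D)) < 2 := by
      rw [mul_one_div, div_lt_iff₀ (by linarith)]
      nlinarith
    nlinarith
  have e1 : A/C - x = (A - x*C)/C := by
    field_simp
  have e2 : (B - 3*A + A)/(D - 3*C + C) - x = ((B - 3*A + A) - x*(D - 3*C + C))/(D - 3*C + C) := by
    rw [div_sub' (by linarith : D - 3*C + C ≠ 0)]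
    ring_nf
  rw [e1, e2]
  apply mul_neg_of_pos_of_neg
  · exact div_pos key1 hC0
  · exact div_neg_of_neg_of_pos key2 (by linarith)

lemma x_in_cyl (i : ℕ) : xval ∈ cyl ((wd i).dropLast) := by
  have hent : ∀ t ∈ (wd i).dropLast, 1 ≤ t :=
    fun t ht => (wd_entries i t (List.dropLast_subset _ ht)).1
  apply mem_cyl_of_btw _ hent
  rw [Nmat_wd_dl i]
  dsimp only
  obtain ⟨hdet, hb1, h3b, hc1, h2c⟩ := st_facts i
  have hdet' : ((st i).a : ℝ)*((st i).d : ℝ) - ((st i).b : ℝ)*((st i).c : ℝ) = 1 := by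
    exact_mod_cast hdet
  have hC' : (1:ℝ) ≤ ((st i).c : ℝ) := by exact_mod_cast hc1
  have hCD' : 2*((st i).c : ℝ) < ((st i).d : ℝ) := by exact_mod_cast h2c
  have hDz : (3:ℤ) ≤ (st i).d := by omega
  have hD' : (3:ℝ) ≤ ((st i).d : ℝ) := by exact_mod_cast hDz
  have hD0 : (0:ℝ) < ((st i).d : ℝ) := by linarith
  have hd : ((st i).d : ℝ) = 3^(mexp (i+3)) := by
    rw [st_d_pow i]; push_cast; rfl
  have h3d : (3:ℝ) * ((st i).d : ℝ)^2 = 3^(mexp (i+4)) := by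
    rw [hd, mexp_succ (i+3), pow_succ, two_mul, pow_add]
    ring
  have hr : (1/3:ℝ)^(mexp (i+4)) = 1/(3 * ((st i).d:ℝ)^2) := by
    rw [div_pow, one_pow, ← h3d]
  have hvb := val_bound i
  rw [hr] at hvb
  have habs : |xval*((st i).d:ℝ) - ((st i).b:ℝ)| ≤ 1/(3*((st i).d:ℝ)) := by
    have e : xval*((st i).d:ℝ) - ((st i).b:ℝ) = (xval - ((st i).b:ℝ)/((st i).d:ℝ))*((st i).d:ℝ) := by
      field_simp
    rw [e, abs_mul, abs_of_pos hD0]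
    calc |xval - ((st i).b:ℝ)/((st i).d:ℝ)| * ((st i).d:ℝ)
        ≤ (1/(3 * ((st i).d:ℝ)^2)) * ((st i).d:ℝ) :=
          mul_le_mul_of_nonneg_right hvb (le_of_lt hD0)
      _ = 1/(3*((st i).d:ℝ)) := by field_simp
  have := final_btw ((st i).a : ℝ) ((st i).b : ℝ) ((st i).c : ℝ) ((st i).d : ℝ) xval
    hdet' hC' hCD' hD' habs
  convert this using 3 <;> push_cast <;> ring

lemma orbit_all (k : ℕ) : 1/10 < gmap^[k] xval ∧ gmap^[k] xval < 1 := by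
  have hlen : k < ((wd k).dropLast).length := by
    have := wd_len k
    rw [List.length_dropLast]
    omega
  exact cyl_orbit _ (fun t ht => wd_entries k t (List.dropLast_subset _ ht)) xval
    (x_in_cyl k) k hlen

lemma xval_mem_Ioo : xval ∈ Set.Ioo (0:ℝ) 1 := by
  have h := (orbit_all 0)
  simp only [Function.iterate_zero, id_eq] at h
  constructor
  · linarith [h.1]
  · exact h.2

/-! ### Irrationality -/

lemma rat_escape : ∀ n : ℕ, ∀ q : ℚ, q.num.natAbs ≤ n → 0 < q → q < 1 →
    ∃ k, ¬(0 < gmap^[k] (q:ℝ) ∧ gmap^[k] (q:ℝ) < 1) := by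
  intro n
  induction n with
  | zero =>
      intro q hq h0 h1
      have := Rat.num_pos.mpr h0
      omega
  | succ n ih =>
      intro q hq h0 h1
      have hg : gmap (q:ℝ) = ((Int.fract q⁻¹ : ℚ) : ℝ) := by
        unfold gmap
        rw [one_div, ← Rat.cast_inv, Rat.cast_fract]
      by_cases hz : 0 < Int.fract q⁻¹
      · have hnum : (Int.fract q⁻¹).num < q.num := Rat.fract_inv_num_lt_num_of_pos h0
        have hnum0 : 0 < (Int.fract q⁻¹).num := Rat.num_pos.mpr hz
        have hq0 : 0 < q.num := Rat.num_pos.mpr h0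
        have hna : (Int.fract q⁻¹).num.natAbs ≤ n := by
          have e1 : ((Int.fract q⁻¹).num.natAbs : ℤ) = (Int.fract q⁻¹).num :=
            Int.natAbs_of_nonneg (le_of_lt hnum0)
          have e2 : (q.num.natAbs : ℤ) = q.num := Int.natAbs_of_nonneg (le_of_lt hq0)
          omega
        obtain ⟨k, hk⟩ := ih (Int.fract q⁻¹) hna hz (Int.fract_lt_one _)
        refine ⟨k+1, ?_⟩
        rw [Function.iterate_succ_apply, hg]
        exact hk
      · refine ⟨1, ?_⟩
        rw [Function.iterate_one, hg]
        rintro ⟨ha, -⟩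
        apply hz
        exact_mod_cast ha
       
lemma xval_irrational : Irrational xval := by
  rintro ⟨q, hq⟩
  have h01 := xval_mem_Ioo
  rw [← hq] at h01
  have hq0 : 0 < q := by exact_mod_cast h01.1
  have hq1 : q < 1 := by exact_mod_cast h01.2
  obtain ⟨k, hk⟩ := rat_escape q.num.natAbs q le_rfl hq0 hq1
  apply hk
  rw [hq]
  refine ⟨by linarith [(orbit_all k).1], (orbit_all k).2⟩

end Stmt7Aux

theorem stmt7 : (Fset 9 ∩ ternaryCantor).Nonempty := by
  refine ⟨Stmt7Aux.xval, ⟨Stmt7Aux.xval_irrational, Stmt7Aux.xval_mem_Ioo, ?_⟩, ?_⟩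
  · intro k
    have hg : gaussMap = Stmt7Aux.gmap := rfl
    rw [hg]
    have h := Stmt7Aux.orbit_all k
    have hy0 : 0 < Stmt7Aux.gmap^[k] Stmt7Aux.xval := by linarith [h.1]
    have h10 : 1 / Stmt7Aux.gmap^[k] Stmt7Aux.xval < ((10:ℤ):ℝ) := by
      rw [div_lt_iff₀ hy0]
      push_cast
      nlinarith [h.1]
    have hf := Int.floor_lt.mpr h10
    have : ((9:ℕ):ℤ) = 9 := by norm_num
    omega
  · exact ⟨Stmt7Aux.bfun, rfl⟩
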